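/- Let P : ℝⁿ → ℝ be continuously differentiable with gradient ∇P, let {x_k}_{k≥0} ⊆ ℝⁿ be bounded, let β̲ > 0, Γ > 0, and assume: (i) P(x_{k+1}) ≤ P(x_k) − (β̲/2)‖x_{k+1} − x_k‖² for all k ≥ 0; (ii) P(x_k) converges, decreasing, to P* ∈ ℝ, and set E_k = P(x_k) − P*; (iii) ‖∇P(x_k)‖ ≤ Γ‖x_k − x_{k−1}‖ for all k ≥ 1; (iv) (Kurdyka–Łojasiewicz property) there exist k₁ ≥ 1, τ > 0 and a continuous concave function φ : [0, τ) → [0, ∞) with φ(0) = 0, φ continuously differentiable on (0, τ) with φ' > 0, such that for all k ≥ k₁ with E_k > 0 one has E_k < τ and φ'(E_k)·‖∇P(x_k)‖ ≥ 1. Then ∑_{k=1}^{∞}‖x_{k+1} − x_k‖ < ∞ (the sequence has finite length), and consequently {x_k} converges to some x* ∈ ℝⁿ with ∇P(x*) = 0. -/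

import Mathlib

open Filter Topology

/-- Tangent-line inequality for a concave function at a differentiability point. -/
lemma concave_tangent_line {τ : ℝ} {φ φ' : ℝ → ℝ}
    (hφconc : ConcaveOn ℝ (Set.Ico 0 τ) φ)
    (hφderiv : ∀ s ∈ Set.Ioo (0 : ℝ) τ, HasDerivAt φ (φ' s) s)
    {y s : ℝ} (hy : y ∈ Set.Ioo (0 : ℝ) τ) (hs : s ∈ Set.Ioo (0 : ℝ) τ) (hys : y ≤ s) :
    φ' s * (s - y) ≤ φ s - φ y := by
  rcases eq_or_lt_of_le hys with rfl | hlt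
  · simp
  · have hy' : y ∈ Set.Ico (0 : ℝ) τ := ⟨hy.1.le, hy.2⟩
    have hs' : s ∈ Set.Ico (0 : ℝ) τ := ⟨(lt_trans hy.1 hlt).le, hs.2⟩
    have claim : ∀ t ∈ Set.Ioo y s, slope φ s t ≤ (φ s - φ y) / (s - y) := by
      intro t ht
      have hadj := hφconc.slope_anti_adjacent hy' hs' ht.1 ht.2
      rw [slope_comm, slope_def_field]
      have hty : (0 : ℝ) < t - y := by linarith [ht.1]
      have hst : (0 : ℝ) < s - t := by linarith [ht.2]
      rw [div_le_div_iff₀ hst hty] at hadj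
      rw [div_le_div_iff₀ hst (by linarith : (0:ℝ) < s - y)]
      nlinarith [hadj]
    have htend : Tendsto (slope φ s) (𝓝[<] s) (𝓝 (φ' s)) :=
      (hasDerivAt_iff_tendsto_slope.mp (hφderiv s hs)).mono_left
        (nhdsWithin_mono s (fun t ht => ne_of_lt ht))
    have hle : φ' s ≤ (φ s - φ y) / (s - y) :=
      le_of_tendsto htend (Filter.eventually_of_mem (Ioo_mem_nhdsLT hlt) claim)
    calc φ' s * (s - y) ≤ (φ s - φ y) / (s - y) * (s - y) :=
          mul_le_mul_of_nonneg_right hle (by linarith)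
      _ = φ s - φ y := div_mul_cancel₀ _ (sub_ne_zero.mpr hlt.ne')

set_option maxHeartbeats 2000000 in
/-- Finite length of the LQP iterates under the Kurdyka–Łojasiewicz
property: if `P` is `C¹`, `{x_k}` is bounded, the sufficient-decrease, convergence of
`P(x_k)` to `P*`, and gradient bound hypotheses hold, and `P` satisfies the KL property
along the iterates with desingularizing function `φ`, then `∑‖x_{k+1} − x_k‖ < ∞` and
`{x_k}` converges to a critical point of `P`. -/
theorem lqp_finite_length_KL {n : ℕ}
    (P : EuclideanSpace ℝ (Fin n) → ℝ) (hP : ContDiff ℝ 1 P)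
    (x : ℕ → EuclideanSpace ℝ (Fin n))
    (hbdd : Bornology.IsBounded (Set.range x))
    (βlb Γ : ℝ) (hβlb : 0 < βlb) (hΓ : 0 < Γ)
    (hdesc : ∀ k : ℕ, P (x (k + 1)) ≤ P (x k) - βlb / 2 * ‖x (k + 1) - x k‖ ^ 2)
    (Pstar : ℝ)
    (hmono : ∀ k : ℕ, P (x (k + 1)) ≤ P (x k))
    (hconv : Tendsto (fun k : ℕ => P (x k)) atTop (𝓝 Pstar))
    (hgrad : ∀ k : ℕ, 1 ≤ k → ‖gradient P (x k)‖ ≤ Γ * ‖x k - x (k - 1)‖)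
    (k₁ : ℕ) (hk₁ : 1 ≤ k₁) (τ : ℝ) (hτ : 0 < τ)
    (φ φ' : ℝ → ℝ)
    (hφcont : ContinuousOn φ (Set.Ico 0 τ))
    (hφconc : ConcaveOn ℝ (Set.Ico 0 τ) φ)
    (hφ0 : φ 0 = 0)
    (hφnonneg : ∀ s ∈ Set.Ico (0 : ℝ) τ, 0 ≤ φ s)
    (hφderiv : ∀ s ∈ Set.Ioo (0 : ℝ) τ, HasDerivAt φ (φ' s) s)
    (hφ'pos : ∀ s ∈ Set.Ioo (0 : ℝ) τ, 0 < φ' s)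
    (hKL : ∀ k : ℕ, k₁ ≤ k → 0 < P (x k) - Pstar →
        P (x k) - Pstar < τ ∧ 1 ≤ φ' (P (x k) - Pstar) * ‖gradient P (x k)‖) :
    Summable (fun k : ℕ => ‖x (k + 1) - x k‖) ∧
    ∃ xstar : EuclideanSpace ℝ (Fin n),
      Tendsto x atTop (𝓝 xstar) ∧ gradient P xstar = 0 := by
  set E : ℕ → ℝ := fun k => P (x k) - Pstar with hEdef
  set a : ℕ → ℝ := fun k => ‖x (k + 1) - x k‖ with hadef
  have hanonneg : ∀ k, 0 ≤ a k := fun k => norm_nonneg _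
  have hPanti : Antitone (fun k : ℕ => P (x k)) := antitone_nat_of_succ_le hmono
  have hEnonneg : ∀ k, 0 ≤ E k := by
    intro k
    have h1 : Pstar ≤ P (x k) :=
      le_of_tendsto hconv (eventually_atTop.2 ⟨k, fun m hm => hPanti hm⟩)
    simp only [hEdef]; linarith
  have hEanti : Antitone E := fun i j h => by
    simp only [hEdef]; exact sub_le_sub_right (hPanti h) _
  have hdesc' : ∀ k, βlb / 2 * a k ^ 2 ≤ E k - E (k + 1) := by
    intro k
    have := hdesc k
    simp only [hEdef, hadef]
    linarith
  have hsum : Summable a := by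
    by_cases hcase : ∃ K, k₁ ≤ K ∧ E K ≤ 0
    · -- eventually constant case
      obtain ⟨K, hK, hEK⟩ := hcase
      have hzero : ∀ m : ℕ, a (m + K) = 0 := by
        intro m
        have h1 : E (m + K) = 0 :=
          le_antisymm (le_trans (hEanti (Nat.le_add_left K m)) hEK) (hEnonneg _)
        have h2 : E (m + K + 1) = 0 :=
          le_antisymm (le_trans (hEanti (by omega)) hEK) (hEnonneg _)
        have h3 := hdesc' (m + K)
        rw [h1, h2] at h3
        have h4 : a (m + K) ^ 2 ≤ 0 := by clear_value a E; nlinarith [h3, hβlb]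
        have h5 : a (m + K) ≤ 0 := by nlinarith [hanonneg (m + K)]
        exact le_antisymm h5 (hanonneg _)
      have heq : (fun m : ℕ => a (m + K)) = fun _ => (0 : ℝ) := funext hzero
      have : Summable (fun m : ℕ => a (m + K)) := by rw [heq]; exact summable_zero
      exact (summable_nat_add_iff K).mp this
    · push_neg at hcase
      -- hcase : ∀ K, k₁ ≤ K → 0 < E K
      set c := Γ / βlb with hcdef
      have hc : 0 < c := div_pos hΓ hβlb
      have hmemIoo : ∀ k, k₁ ≤ k → E k ∈ Set.Ioo (0 : ℝ) τ := by
        intro k hk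
        exact ⟨hcase k hk, (hKL k hk (hcase k hk)).1⟩
      have key : ∀ m : ℕ,
          a (k₁ + m) ≤ 1 / 2 * a (k₁ - 1 + m)
            + c * (φ (E (k₁ + m)) - φ (E (k₁ + m + 1))) := by
        intro m
        set k := k₁ + m with hkdef
        have hk : k₁ ≤ k := Nat.le_add_right _ _
        have hk1 : 1 ≤ k := le_trans hk₁ hk
        have hmem : E k ∈ Set.Ioo (0 : ℝ) τ := hmemIoo k hk
        have hmem' : E (k + 1) ∈ Set.Ioo (0 : ℝ) τ := hmemIoo (k + 1) (by omega)
        have hE1 : E (k + 1) ≤ E k := hEanti (Nat.le_succ k)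
        obtain ⟨hτk, hKLk⟩ := hKL k hk hmem.1
        have hp : 0 < φ' (E k) := hφ'pos _ hmem
        set p := φ' (E k) with hpdef
        set A := a k with hAdef
        set B := a (k₁ - 1 + m) with hBdef
        have hA : 0 ≤ A := hanonneg _
        have hB : 0 ≤ B := hanonneg _
        -- gradient bound in terms of B
        have hBeq : ‖x k - x (k - 1)‖ = B := by
          have e1 : k₁ - 1 + m + 1 = k := by omega
          have e2 : k - 1 = k₁ - 1 + m := by omega
          simp only [hBdef, hadef]
          rw [e1, e2]
        have hgradk : ‖gradient P (x k)‖ ≤ Γ * B := by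
          have := hgrad k hk1; rwa [hBeq] at this
        have h5 : 1 ≤ p * (Γ * B) :=
          le_trans hKLk (mul_le_mul_of_nonneg_left hgradk hp.le)
        -- tangent line
        have htan : p * (E k - E (k + 1)) ≤ φ (E k) - φ (E (k + 1)) := by
          have := concave_tangent_line hφconc hφderiv hmem' hmem hE1
          linarith [this]
        set D := φ (E k) - φ (E (k + 1)) with hDdef
        have hdescA : βlb / 2 * A ^ 2 ≤ E k - E (k + 1) := hdesc' k
        have hpD : p * (βlb / 2 * A ^ 2) ≤ D :=
          le_trans (mul_le_mul_of_nonneg_left hdescA hp.le) htan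
        have hD : 0 ≤ D := le_trans (by positivity) hpD
        -- A^2 ≤ (2Γ/βlb) * B * D
        have hA2 : A ^ 2 ≤ 2 * c * B * D := by
          have h6 : A ^ 2 ≤ A ^ 2 * (p * (Γ * B)) :=
            le_mul_of_one_le_right (sq_nonneg A) h5
          have h7 : p * A ^ 2 ≤ 2 / βlb * D := by
            have h8 : p * A ^ 2 = 2 / βlb * (p * (βlb / 2 * A ^ 2)) := by
              field_simp
            rw [h8]
            exact mul_le_mul_of_nonneg_left hpD (by positivity)
          calc A ^ 2 ≤ A ^ 2 * (p * (Γ * B)) := h6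
            _ = Γ * B * (p * A ^ 2) := by ring
            _ ≤ Γ * B * (2 / βlb * D) :=
                mul_le_mul_of_nonneg_left h7 (by positivity)
            _ = 2 * c * B * D := by rw [hcdef]; ring
        -- AM-GM
        have hAM : A ^ 2 ≤ (1 / 2 * B + c * D) ^ 2 := by
          clear_value A B c D
          nlinarith [sq_nonneg (1 / 2 * B - c * D), hA2]
        have hRHS : 0 ≤ 1 / 2 * B + c * D := by
          clear_value A B c D
          nlinarith [mul_nonneg hc.le hD, hB]
        exact (pow_le_pow_iff_left₀ hA hRHS (by norm_num)).mp hAM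
      -- telescoping bound on partial sums
      have hψnonneg : ∀ m : ℕ, 0 ≤ φ (E (k₁ + m)) := by
        intro m
        have hmem := hmemIoo (k₁ + m) (Nat.le_add_right _ _)
        exact hφnonneg _ ⟨hmem.1.le, hmem.2⟩
      have hbound : ∀ N : ℕ, ∑ m ∈ Finset.range N, a (k₁ + m)
          ≤ a (k₁ - 1) + 2 * c * φ (E k₁) := by
        intro N
        set ψ : ℕ → ℝ := fun m => φ (E (k₁ + m)) with hψdef
        have h1 : ∑ m ∈ Finset.range N, a (k₁ + m)
            ≤ ∑ m ∈ Finset.range N,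
              (1 / 2 * a (k₁ - 1 + m) + c * (ψ m - ψ (m + 1))) := by
          apply Finset.sum_le_sum
          intro m _
          have hkey := key m
          have e : k₁ + (m + 1) = k₁ + m + 1 := by omega
          simp only [hψdef]
          rw [e]
          exact hkey
        have h2 : ∑ m ∈ Finset.range N,
              (1 / 2 * a (k₁ - 1 + m) + c * (ψ m - ψ (m + 1)))
            = 1 / 2 * ∑ m ∈ Finset.range N, a (k₁ - 1 + m) + c * (ψ 0 - ψ N) := by
          rw [Finset.sum_add_distrib, ← Finset.mul_sum, ← Finset.mul_sum,
            Finset.sum_range_sub' ψ N]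
        have h3 : ∑ m ∈ Finset.range N, a (k₁ - 1 + m)
            ≤ a (k₁ - 1) + ∑ m ∈ Finset.range N, a (k₁ + m) := by
          have h4 : ∑ m ∈ Finset.range N, a (k₁ - 1 + m)
              ≤ ∑ m ∈ Finset.range (N + 1), a (k₁ - 1 + m) :=
            Finset.sum_le_sum_of_subset_of_nonneg
              (Finset.range_subset_range.mpr (Nat.le_succ N)) (fun i _ _ => hanonneg _)
          have h5 : ∑ m ∈ Finset.range (N + 1), a (k₁ - 1 + m)
              = (∑ m ∈ Finset.range N, a (k₁ - 1 + (m + 1))) + a (k₁ - 1 + 0) :=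
            Finset.sum_range_succ' _ N
          have h6 : ∀ m : ℕ, a (k₁ - 1 + (m + 1)) = a (k₁ + m) := by
            intro m; congr 1; omega
          simp only [h6, Nat.add_zero] at h5
          linarith [h4, h5.le]
        have hψN : 0 ≤ ψ N := hψnonneg N
        have hψ0 : ψ 0 = φ (E k₁) := by simp [hψdef]
        have hfin := h1.trans h2.le
        rw [hψ0] at hfin
        clear_value ψ c a E
        nlinarith [hfin, h3, mul_nonneg hc.le hψN]
      have hsum' : Summable (fun m : ℕ => a (k₁ + m)) :=
        summable_of_sum_range_le (fun m => hanonneg _) hbound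
      have hcomm : (fun m : ℕ => a (m + k₁)) = fun m : ℕ => a (k₁ + m) :=
        funext fun m => by rw [Nat.add_comm]
      have hsum'' : Summable (fun m : ℕ => a (m + k₁)) := by rw [hcomm]; exact hsum'
      exact (summable_nat_add_iff k₁).mp hsum''
  -- from summability: convergence and criticality
  have hcauchy : CauchySeq x := by
    apply cauchySeq_of_dist_le_of_summable a _ hsum
    intro m
    have heq : dist (x m) (x (m + 1)) = a m := by
      rw [dist_eq_norm, norm_sub_rev]
    exact le_of_eq heq
  obtain ⟨xstar, hx⟩ := cauchySeq_tendsto_of_complete hcauchy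
  refine ⟨hsum, xstar, hx, ?_⟩
  have hgradcont : Continuous (fun y => gradient P y) := by
    have h1 : Continuous (fderiv ℝ P) := hP.continuous_fderiv one_ne_zero
    exact ((InnerProductSpace.toDual ℝ
      (EuclideanSpace ℝ (Fin n))).symm.continuous.comp h1 : _)
  have t1 : Tendsto (fun k => ‖gradient P (x k)‖) atTop (𝓝 ‖gradient P xstar‖) :=
    ((continuous_norm.comp hgradcont).tendsto xstar).comp hx
  have ha0 : Tendsto a atTop (𝓝 0) := hsum.tendsto_atTop_zero
  have ha0' : Tendsto (fun k : ℕ => a (k - 1)) atTop (𝓝 0) :=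
    ha0.comp (tendsto_sub_atTop_nat 1)
  have t2 : Tendsto (fun k : ℕ => Γ * a (k - 1)) atTop (𝓝 0) := by
    simpa using ha0'.const_mul Γ
  have hev : ∀ᶠ k in atTop, ‖gradient P (x k)‖ ≤ Γ * a (k - 1) := by
    rw [eventually_atTop]
    refine ⟨1, fun k hk => ?_⟩
    have e : k - 1 + 1 = k := by omega
    have heq : ‖x k - x (k - 1)‖ = a (k - 1) := by
      simp only [hadef]; rw [e]
    calc ‖gradient P (x k)‖ ≤ Γ * ‖x k - x (k - 1)‖ := hgrad k hk
      _ = Γ * a (k - 1) := by rw [heq]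
  have hle : ‖gradient P xstar‖ ≤ 0 := le_of_tendsto_of_tendsto t1 t2 hev
  exact norm_le_zero_iff.mp hle
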